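/- Define E : ℕ → ℝ by E[0] = 0 and (1 - qⁿ)·E[n] = 1 + Σ_{k=0}^{n-1} C(n,k) p^{n-k} q^k E[k] for n ≥ 1, where p ∈ (0,1) and q = 1-p. Then E[n] ≤ A·log(n+1) for all n, where A = 1/log(2/(1+q)). -/

import Mathlib

open Finset

lemma hub_sum_one (p q : ℝ) (h : p + q = 1) (n : ℕ) :
    ∑ k ∈ range (n + 1), (n.choose k : ℝ) * p ^ (n - k) * q ^ k = 1 := by
  calc ∑ k ∈ range (n + 1), (n.choose k : ℝ) * p ^ (n - k) * q ^ k
      = ∑ k ∈ range (n + 1), q ^ k * p ^ (n - k) * (n.choose k : ℝ) := by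
        apply Finset.sum_congr rfl; intro k _; ring
    _ = (q + p) ^ n := (add_pow q p n).symm
    _ = 1 := by rw [show q + p = 1 by linarith, one_pow]

lemma hub_mean (p q : ℝ) (h : p + q = 1) (n : ℕ) :
    ∑ k ∈ range (n + 1), (n.choose k : ℝ) * p ^ (n - k) * q ^ k * (k : ℝ)
      = (n : ℝ) * q := by
  cases n with
  | zero => simp
  | succ m =>
    rw [Finset.sum_range_succ']
    simp only [Nat.cast_zero, mul_zero, add_zero, Nat.cast_succ]
    have key : ∀ i : ℕ, i ∈ range (m + 1) →
        ((m+1).choose (i+1) : ℝ) * p ^ (m + 1 - (i+1)) * q ^ (i+1) * ((i:ℝ)+1)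
          = ((m:ℝ)+1) * q * ((m.choose i : ℝ) * p ^ (m - i) * q ^ i) := by
      intro i hi
      have h1 : (m+1) * m.choose i = (m+1).choose (i+1) * (i+1) :=
        Nat.add_one_mul_choose_eq m i
      have h1' : ((m:ℝ)+1) * (m.choose i : ℝ) = ((m+1).choose (i+1) : ℝ) * ((i:ℝ)+1) := by
        exact_mod_cast h1
      have h2 : m + 1 - (i+1) = m - i := by omega
      rw [h2, pow_succ]
      linear_combination (-(p ^ (m - i) * q ^ i * q)) * h1' 
    rw [Finset.sum_congr rfl key, ← Finset.mul_sum, hub_sum_one p q h m, mul_one]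

lemma hub_jensen (p q : ℝ) (hp : 0 ≤ p) (hq : 0 ≤ q) (h : p + q = 1) (n : ℕ) :
    ∑ k ∈ range (n + 1), (n.choose k : ℝ) * p ^ (n - k) * q ^ k * Real.log ((k : ℝ) + 1)
      ≤ Real.log ((n : ℝ) * q + 1) := by
  have hconc : ConcaveOn ℝ (Set.Ioi 0) Real.log := strictConcaveOn_log_Ioi.concaveOn
  have := hconc.le_map_sum (t := range (n+1))
    (w := fun k => (n.choose k : ℝ) * p ^ (n - k) * q ^ k)
    (p := fun k => (k : ℝ) + 1)
    (fun i _ => mul_nonneg (mul_nonneg (by positivity) (pow_nonneg hp _)) (pow_nonneg hq _))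
    (hub_sum_one p q h n)
    (fun i _ => Set.mem_Ioi.mpr (by positivity))
  simp only [smul_eq_mul] at this
  have hsum : ∑ k ∈ range (n + 1), (n.choose k : ℝ) * p ^ (n - k) * q ^ k * ((k:ℝ) + 1)
      = (n : ℝ) * q + 1 := by
    have := hub_mean p q h n
    have h1 := hub_sum_one p q h n
    calc ∑ k ∈ range (n + 1), (n.choose k : ℝ) * p ^ (n - k) * q ^ k * ((k:ℝ) + 1)
        = (∑ k ∈ range (n + 1), (n.choose k : ℝ) * p ^ (n - k) * q ^ k * (k:ℝ))
          + ∑ k ∈ range (n + 1), (n.choose k : ℝ) * p ^ (n - k) * q ^ k := by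
          rw [← Finset.sum_add_distrib]; apply Finset.sum_congr rfl; intro k _; ring
      _ = (n : ℝ) * q + 1 := by rw [this, h1]
  rwa [hsum] at this

open Finset in
/-- Hub recurrence upper bound: `E n ≤ A·log(n+1)` with `A = 1/log(2/(1+q))`. -/
theorem hub_upper_bound (p : ℝ) (hp0 : 0 < p) (hp1 : p < 1) (q : ℝ) (hq : q = 1 - p)
    (E : ℕ → ℝ) (hE0 : E 0 = 0)
    (hrec : ∀ n : ℕ, 1 ≤ n →
      (1 - q ^ n) * E n =
        1 + ∑ k ∈ range n, (n.choose k : ℝ) * p ^ (n - k) * q ^ k * E k) :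
    ∀ n : ℕ, E n ≤ (1 / Real.log (2 / (1 + q))) * Real.log ((n : ℝ) + 1) := by
  have hq0 : 0 < q := by rw [hq]; linarith
  have hq1 : q < 1 := by rw [hq]; linarith
  have hpq : p + q = 1 := by rw [hq]; ring
  set L := Real.log (2 / (1 + q)) with hL
  have hL0 : 0 < L := by
    apply Real.log_pos
    rw [lt_div_iff₀ (by linarith)]; linarith
  set A := 1 / L with hA
  have hA0 : 0 < A := by positivity
  have hAL : A * L = 1 := by rw [hA]; field_simp
  intro n
  induction n using Nat.strong_induction_on with
  | _ n ih =>
    cases n with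
    | zero => simp [hE0]
    | succ m =>
      set n := m + 1
      have hn1 : 1 ≤ n := Nat.le_add_left 1 m
      have hqn : q ^ n < 1 := pow_lt_one₀ hq0.le hq1 (by omega)
      have hqn0 : 0 < 1 - q ^ n := by linarith
      -- bound the sum using IH
      have hsum_le : ∑ k ∈ range n, (n.choose k : ℝ) * p ^ (n - k) * q ^ k * E k
          ≤ ∑ k ∈ range n, (n.choose k : ℝ) * p ^ (n - k) * q ^ k *
              (A * Real.log ((k : ℝ) + 1)) := by
        apply Finset.sum_le_sum
        intro k hk
        have hk' : k < n := Finset.mem_range.mp hk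
        exact mul_le_mul_of_nonneg_left (ih k hk') (by positivity)
      -- Jensen bound on the full sum
      have hjensen := hub_jensen p q hp0.le hq0.le hpq n
      have hlogmono : Real.log ((n : ℝ) * q + 1) ≤ Real.log ((n:ℝ)+1) - L := by
        have hineq : (n : ℝ) * q + 1 ≤ ((n:ℝ)+1) * ((1+q)/2) := by
          have hn1' : (1:ℝ) ≤ (n : ℝ) := by exact_mod_cast hn1
          nlinarith
        have hnq : (0:ℝ) < (n : ℝ) * q + 1 := by
          have := mul_nonneg (Nat.cast_nonneg (α := ℝ) n) hq0.le; linarith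
        have h1 : Real.log ((n : ℝ) * q + 1) ≤ Real.log (((n:ℝ)+1) * ((1+q)/2)) :=
          Real.log_le_log hnq hineq
        have h2 : Real.log (((n:ℝ)+1) * ((1+q)/2)) = Real.log ((n:ℝ)+1) - L := by
          have h1q : (0:ℝ) < 1 + q := by linarith
          rw [Real.log_mul (by positivity) (by linarith : (0:ℝ) < (1+q)/2).ne', hL,
            Real.log_div (by norm_num) h1q.ne',
            Real.log_div h1q.ne' (by norm_num)]
          ring
        linarith
      -- split full sum
      have hsplit : ∑ k ∈ range (n+1), (n.choose k : ℝ) * p ^ (n - k) * q ^ k *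
            Real.log ((k : ℝ) + 1)
          = (∑ k ∈ range n, (n.choose k : ℝ) * p ^ (n - k) * q ^ k *
              Real.log ((k : ℝ) + 1)) + q ^ n * Real.log ((n:ℝ)+1) := by
        rw [Finset.sum_range_succ, Nat.choose_self, Nat.sub_self]
        push_cast; ring
      have hfull : ∑ k ∈ range n, (n.choose k : ℝ) * p ^ (n - k) * q ^ k *
            Real.log ((k : ℝ) + 1)
          ≤ Real.log ((n:ℝ)+1) - L - q ^ n * Real.log ((n:ℝ)+1) := by
        have := hjensen
        rw [hsplit] at this
        linarith
      have hmain : (1 - q ^ n) * E n ≤ (1 - q ^ n) * (A * Real.log ((n:ℝ)+1)) := by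
        rw [hrec n hn1]
        have : ∑ k ∈ range n, (n.choose k : ℝ) * p ^ (n - k) * q ^ k *
              (A * Real.log ((k : ℝ) + 1))
            = A * ∑ k ∈ range n, (n.choose k : ℝ) * p ^ (n - k) * q ^ k *
              Real.log ((k : ℝ) + 1) := by
          rw [Finset.mul_sum]; apply Finset.sum_congr rfl; intro k _; ring
        have h3 : ∑ k ∈ range n, (n.choose k : ℝ) * p ^ (n - k) * q ^ k * E k
            ≤ A * (Real.log ((n:ℝ)+1) - L - q ^ n * Real.log ((n:ℝ)+1)) := by
          calc _ ≤ _ := hsum_le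
            _ = A * ∑ k ∈ range n, (n.choose k : ℝ) * p ^ (n - k) * q ^ k *
                Real.log ((k : ℝ) + 1) := this
            _ ≤ _ := mul_le_mul_of_nonneg_left hfull hA0.le
        nlinarith [h3, hAL]
      have := (mul_le_mul_iff_right₀ hqn0).mp hmain
      simpa [hA] using this
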